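/- Let C be a monoidal category acting on itself by the tensor product, and let x, u, y, v, m be objects with α : x ⟶ m ⊗ y and β : m ⊗ v ⟶ u. Then in Optic((x,u),(y,v)) one has the equality ⟨α ≫ (λ_{m ⊗ y}).inv, (λ_{m ⊗ v}).hom ≫ β | 𝟙⟩ ≫ ⟨𝟙 (m ⊗ y), 𝟙 (m ⊗ v) | m⟩ = ⟨α, β | m⟩, where the first factor lies in Optic((x,u),(m ⊗ y, m ⊗ v)), the second in Optic((m ⊗ y, m ⊗ v),(y,v)), and ≫ denotes optic composition. That is, every optic is the composite of an adapter with a cap optic. -/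

import Mathlib

open CategoryTheory MonoidalCategory

variable {C : Type*} [Category C] [MonoidalCategory C]

/-- Representatives of optics (for the canonical self-action of a monoidal category). -/
def OpticRep (x u y v : C) : Type _ :=
  Σ m : C, (x ⟶ m ⊗ y) × (m ⊗ v ⟶ u)

/-- The coend relation: for `f : n ⟶ m`, `α : x ⟶ n ⊗ y`, `β : m ⊗ v ⟶ u`,
`(m, α ≫ (f ⊗ 𝟙 y), β)` is related to `(n, α, (f ⊗ 𝟙 v) ≫ β)`. -/
def OpticRel (x u y v : C) : OpticRep x u y v → OpticRep x u y v → Prop :=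
  fun A B => ∃ f : B.1 ⟶ A.1,
    A.2.1 = B.2.1 ≫ (f ⊗ₘ 𝟙 y) ∧ B.2.2 = (f ⊗ₘ 𝟙 v) ≫ A.2.2

/-- The optic coend `Optic((x,u),(y,v))`. -/
def Optic (x u y v : C) : Type _ := Quot (OpticRel x u y v)

/-- Optic composition on representatives:
`⟨α, β | m⟩ ≫ ⟨α', β' | n⟩ :=
⟨α ≫ (𝟙 m ⊗ α') ≫ (α_ m n z).inv, (α_ m n w).hom ≫ (𝟙 m ⊗ β') ≫ β | m ⊗ n⟩`. -/
def opticCompRep {x u y v z w : C} (A : OpticRep x u y v) (B : OpticRep y v z w) :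
    OpticRep x u z w :=
  ⟨A.1 ⊗ B.1, A.2.1 ≫ (𝟙 A.1 ⊗ₘ B.2.1) ≫ (α_ A.1 B.1 z).inv,
    (α_ A.1 B.1 w).hom ≫ (𝟙 A.1 ⊗ₘ B.2.2) ≫ A.2.2⟩

/-- Every optic `⟨α, β | m⟩` is the composite of the adapter
`⟨α ≫ (λ_{m ⊗ y}).inv, (λ_{m ⊗ v}).hom ≫ β | 𝟙⟩` with the cap optic
`⟨𝟙 (m ⊗ y), 𝟙 (m ⊗ v) | m⟩`. -/
theorem optic_representation (x u y v m : C) (α : x ⟶ m ⊗ y) (β : m ⊗ v ⟶ u) :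
    Quot.mk (OpticRel x u y v)
      (opticCompRep
        (⟨𝟙_ C, α ≫ (λ_ (m ⊗ y)).inv, (λ_ (m ⊗ v)).hom ≫ β⟩ :
          OpticRep x u (m ⊗ y) (m ⊗ v))
        (⟨m, 𝟙 (m ⊗ y), 𝟙 (m ⊗ v)⟩ : OpticRep (m ⊗ y) (m ⊗ v) y v)) =
    Quot.mk (OpticRel x u y v) ⟨m, α, β⟩ := by
  apply Quot.sound
  refine ⟨(λ_ m).inv, ?_, ?_⟩ <;>
  · show _ = _
    simp only [opticCompRep]
    coherence
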